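/- arXiv:cs/0010034 — 2 statements merged into one kernel-verified Lean document; each statement's English description precedes it below -/
import Mathlib

section
/- If there exists an infinite rewrite sequence t = t0 →_P t1 →_P t2 →_P ... starting from the term t, then the needs graph of P contains a directed cycle having a vertex that is reachable by a directed path (possibly of length zero) from a vertex representing a function symbol or constant occurring in t. Equivalently (Proposition 2 of the paper, in contrapositive form): if no vertex lying on a cycle of the needs graph of P is reachable from any symbol occurring in t, then every rewrite sequence starting from t is finite, i.e., t is strongly normalizing with respect to P. -/
/-- First-order terms over a signature `σ` (function symbols and constants,
where constants are symbols applied to the empty argument list) and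
variables `ν`. -/
inductive Term (σ ν : Type) : Type
  | var : ν → Term σ ν
  | app : σ → List (Term σ ν) → Term σ ν

namespace Term

variable {σ ν : Type}

/-- Applying a substitution to a term. -/
def subst (θ : ν → Term σ ν) : Term σ ν → Term σ ν
  | .var v => θ v
  | .app f ts => .app f (ts.attach.map fun x => subst θ x.1)
  decreasing_by have := List.sizeOf_lt_of_mem x.2; simp at this ⊢; omega

/-- The set of function symbols and constants occurring in a term. -/
def symbols : Term σ ν → Set σ
  | .var _ => ∅
  | .app f ts => {f} ∪ (ts.attach.map fun x => symbols x.1).foldr (· ∪ ·) ∅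
  decreasing_by have := List.sizeOf_lt_of_mem x.2; simp at this ⊢; omega

/-- The set of variables occurring in a term. -/
def vars : Term σ ν → Set ν
  | .var v => {v}
  | .app _ ts => (ts.attach.map fun x => vars x.1).foldr (· ∪ ·) ∅
  decreasing_by have := List.sizeOf_lt_of_mem x.2; simp at this ⊢; omega

/-- The outermost (root) symbol of a term, if any. -/
def root : Term σ ν → Option σ
  | .var _ => none
  | .app f _ => some f

/-- `u.IsSubtermOf t` holds when `u` is a (not necessarily proper) subterm of `t`. -/
inductive IsSubtermOf : Term σ ν → Term σ ν → Prop
  | refl (t : Term σ ν) : IsSubtermOf t t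
  | arg {u t : Term σ ν} {f : σ} {ts : List (Term σ ν)} :
      t ∈ ts → IsSubtermOf u t → IsSubtermOf u (.app f ts)

end Term

/-- A rewrite rule `l → r`: `l` is not a variable and every variable of `r`
occurs in `l`. -/
structure Rule (σ ν : Type) where
  lhs : Term σ ν
  rhs : Term σ ν
  lhs_not_var : ∀ v, lhs ≠ .var v
  vars_subset : rhs.vars ⊆ lhs.vars

/-- A term rewriting system: a finite set (list) of rules. -/
structure TRS (σ ν : Type) where
  rules : List (Rule σ ν)

namespace TRS

variable {σ ν : Type}

/-- The one-step rewrite relation of `P`: replace an instance `lσ` of a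
left-hand side, occurring as a subterm, by the corresponding instance `rσ`. -/
inductive Rewrite (P : TRS σ ν) : Term σ ν → Term σ ν → Prop
  | root {ρ : Rule σ ν} (hρ : ρ ∈ P.rules) (θ : ν → Term σ ν) :
      Rewrite P (ρ.lhs.subst θ) (ρ.rhs.subst θ)
  | congr {s t : Term σ ν} (f : σ) (pre post : List (Term σ ν)) :
      Rewrite P s t →
      Rewrite P (.app f (pre ++ s :: post)) (.app f (pre ++ t :: post))

/-- A symbol is defined if it is the outermost symbol of the left-hand side
of some rule. -/
def Defined (P : TRS σ ν) (f : σ) : Prop :=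
  ∃ ρ ∈ P.rules, ρ.lhs.root = some f

/-- Edge `f ⟶ g` of the needs graph: `f` is the root (defined) symbol of the
left-hand side of some rule whose right-hand side contains `g`. -/
def NeedsEdge (P : TRS σ ν) (f g : σ) : Prop :=
  ∃ ρ ∈ P.rules, ρ.lhs.root = some f ∧ g ∈ ρ.rhs.symbols

/-- A term is in normal form if no subterm of it is an instance of the
left-hand side of a rule of `P`. -/
def NormalForm (P : TRS σ ν) (s : Term σ ν) : Prop :=
  ∀ u : Term σ ν, u.IsSubtermOf s → ∀ ρ ∈ P.rules, ∀ θ : ν → Term σ ν, u ≠ ρ.lhs.subst θ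

end TRS

section Aux
variable {σ ν : Type}
open Term

theorem Term.my_ind {motive : Term σ ν → Prop} (hvar : ∀ v, motive (.var v))
    (happ : ∀ f ts, (∀ u ∈ ts, motive u) → motive (.app f ts)) : ∀ u, motive u
  | .var v => hvar v
  | .app f ts => happ f ts (fun u hu => Term.my_ind hvar happ u)
  decreasing_by have := List.sizeOf_lt_of_mem hu; simp at this ⊢; omega

theorem mem_foldr_union {α : Type} (L : List (Set α)) (a : α) :
    a ∈ L.foldr (· ∪ ·) ∅ ↔ ∃ s ∈ L, a ∈ s := by
  induction L with
  | nil => simp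
  | cons s L ih => simp [List.foldr_cons, Set.mem_union, ih]

theorem mem_symbols_app {g f : σ} {ts : List (Term σ ν)} :
    g ∈ (Term.app f ts).symbols ↔ g = f ∨ ∃ u ∈ ts, g ∈ u.symbols := by
  rw [Term.symbols]
  simp [mem_foldr_union]

theorem mem_vars_app {v : ν} {f : σ} {ts : List (Term σ ν)} :
    v ∈ (Term.app f ts).vars ↔ ∃ u ∈ ts, v ∈ u.vars := by
  rw [Term.vars]
  simp [mem_foldr_union]

theorem symbols_var (v : ν) : (Term.var v : Term σ ν).symbols = ∅ := by rw [Term.symbols]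

theorem vars_var (v : ν) : (Term.var v : Term σ ν).vars = {v} := by rw [Term.vars]

theorem subst_app (θ : ν → Term σ ν) (f : σ) (ts : List (Term σ ν)) :
    (Term.app f ts).subst θ = .app f (ts.map (·.subst θ)) := by
  rw [Term.subst]
  congr 1
  rw [List.map_attach_eq_pmap]
  simp

theorem symbols_finite : ∀ u : Term σ ν, u.symbols.Finite := by
  intro u
  induction u using Term.my_ind with
  | hvar v => rw [symbols_var]; exact Set.finite_empty
  | happ f ts ih =>
    have : (Term.app f ts).symbols ⊆ {f} ∪ ⋃ u ∈ {u | u ∈ ts}, u.symbols := by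
      intro g hg
      rcases mem_symbols_app.1 hg with h | ⟨u, hu, hg⟩
      · exact Or.inl h
      · exact Or.inr (Set.mem_biUnion hu hg)
    exact Set.Finite.subset (Set.Finite.union (Set.finite_singleton f)
      (Set.Finite.biUnion (ts.finite_toSet) (fun u hu => ih u hu))) this

end Aux
section Aux2
variable {σ ν : Type}

theorem symbols_subset_of_subterm {u s : Term σ ν} (h : u.IsSubtermOf s) :
    u.symbols ⊆ s.symbols := by
  induction h with
  | refl => exact subset_rfl
  | arg hmem _ ih =>
    intro g hg
    exact mem_symbols_app.2 (Or.inr ⟨_, hmem, ih hg⟩)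

theorem var_subterm_of_mem_vars : ∀ (u : Term σ ν) (v : ν), v ∈ u.vars →
    (Term.var v).IsSubtermOf u := by
  intro u
  induction u using Term.my_ind with
  | hvar w => intro v hv; rw [vars_var] at hv; cases hv; exact .refl _
  | happ f ts ih =>
    intro v hv
    rcases mem_vars_app.1 hv with ⟨w, hw, hv⟩
    exact .arg hw (ih w hw v hv)

theorem subst_subterm {θ : ν → Term σ ν} {u l : Term σ ν} (h : u.IsSubtermOf l) :
    (u.subst θ).IsSubtermOf (l.subst θ) := by
  induction h with
  | refl => exact .refl _
  | arg hmem _ ih =>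
    rw [subst_app]
    exact .arg (List.mem_map_of_mem hmem) ih

theorem theta_subterm {θ : ν → Term σ ν} {l : Term σ ν} {v : ν} (h : v ∈ l.vars) :
    (θ v).IsSubtermOf (l.subst θ) := by
  have := subst_subterm (θ := θ) (var_subterm_of_mem_vars l v h)
  rwa [Term.subst] at this

theorem symbols_subst (θ : ν → Term σ ν) : ∀ u : Term σ ν, ∀ g,
    g ∈ (u.subst θ).symbols → g ∈ u.symbols ∨ ∃ v ∈ u.vars, g ∈ (θ v).symbols := by
  intro u
  induction u using Term.my_ind with
  | hvar v =>
    intro g hg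
    rw [Term.subst] at hg
    exact Or.inr ⟨v, by rw [vars_var]; rfl, hg⟩
  | happ f ts ih =>
    intro g hg
    rw [subst_app] at hg
    rcases mem_symbols_app.1 hg with h | ⟨w, hw, hg⟩
    · exact Or.inl (mem_symbols_app.2 (Or.inl h))
    · rcases List.mem_map.1 hw with ⟨u, hu, rfl⟩
      rcases ih u hu g hg with h | ⟨v, hv, h⟩
      · exact Or.inl (mem_symbols_app.2 (Or.inr ⟨u, hu, h⟩))
      · exact Or.inr ⟨v, mem_vars_app.2 ⟨u, hu, hv⟩, h⟩

theorem lhs_app (ρ : Rule σ ν) : ∃ f ts, ρ.lhs = Term.app f ts := by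
  cases h : ρ.lhs with
  | var v => exact absurd h (ρ.lhs_not_var v)
  | app f ts => exact ⟨f, ts, rfl⟩

end Aux2
section Aux3
variable {σ ν : Type}

/-- Size of a term. -/
def sizeT : Term σ ν → ℕ
  | .var _ => 1
  | .app _ ts => 1 + (ts.attach.map fun x => sizeT x.1).sum
  decreasing_by have := List.sizeOf_lt_of_mem x.2; simp at this ⊢; omega

theorem sizeT_app (f : σ) (ts : List (Term σ ν)) :
    sizeT (Term.app f ts) = 1 + (ts.map sizeT).sum := by
  rw [sizeT, List.map_attach_eq_pmap]; simp

theorem sizeT_pos : ∀ u : Term σ ν, 1 ≤ sizeT u := by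
  intro u
  induction u using Term.my_ind with
  | hvar v => rw [sizeT]
  | happ f ts _ => rw [sizeT_app]; omega

/-- Interpretation of terms into ℕ, given symbol weights `C`. -/
def interp (C : σ → ℕ) : Term σ ν → ℕ
  | .var _ => 1
  | .app f ts => C f * (1 + (ts.attach.map fun x => interp C x.1).sum)
  decreasing_by have := List.sizeOf_lt_of_mem x.2; simp at this ⊢; omega

theorem interp_app (C : σ → ℕ) (f : σ) (ts : List (Term σ ν)) :
    interp C (Term.app f ts) = C f * (1 + (ts.map (interp C)).sum) := by
  rw [interp, List.map_attach_eq_pmap]; simp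

theorem interp_pos {C : σ → ℕ} (hC : ∀ f, 1 ≤ C f) : ∀ u : Term σ ν, 1 ≤ interp C u := by
  intro u
  induction u using Term.my_ind with
  | hvar v => rw [interp]
  | happ f ts _ => rw [interp_app]; exact Nat.mul_pos (hC f) (by omega)

theorem interp_subterm {C : σ → ℕ} (hC : ∀ f, 1 ≤ C f) {u s : Term σ ν}
    (h : u.IsSubtermOf s) : interp C u ≤ interp C s := by
  induction h with
  | refl => exact le_rfl
  | @arg w f ts hmem _ ih =>
    refine ih.trans ?_
    rw [interp_app]
    calc interp C w ≤ 1 + (ts.map (interp C)).sum := by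
          have : interp C w ≤ (ts.map (interp C)).sum :=
            List.le_sum_of_mem (List.mem_map_of_mem hmem)
          omega
      _ ≤ C f * (1 + (ts.map (interp C)).sum) := Nat.le_mul_of_pos_left _ (hC f)

/-- Upper bound on the interpretation of a substituted term. -/
theorem interp_subst_le {C : σ → ℕ} {θ : ν → Term σ ν} {L D : ℕ} (hL : 1 ≤ L) (hD : 1 ≤ D) :
    ∀ r : Term σ ν, (∀ g ∈ r.symbols, C g ≤ D) → (∀ v ∈ r.vars, interp C (θ v) ≤ L) →
    sizeT r ≤ D → interp C (r.subst θ) ≤ D ^ (2 * sizeT r) * L := by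
  intro r
  induction r using Term.my_ind with
  | hvar v =>
    intro _ hv _
    rw [Term.subst]
    calc interp C (θ v) ≤ L := hv v (by rw [vars_var]; rfl)
      _ ≤ D ^ (2 * sizeT (Term.var v : Term σ ν)) * L :=
          Nat.le_mul_of_pos_left _ (by positivity)
  | happ f ts ih =>
    intro hsym hvars hsize
    rw [subst_app, interp_app]
    set S : ℕ := (ts.map sizeT).sum with hS
    have hCf : C f ≤ D := hsym f (mem_symbols_app.2 (Or.inl rfl))
    -- bound each argument
    have harg : ∀ u ∈ ts, interp C (u.subst θ) ≤ D ^ (2 * S) * L := by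
      intro u hu
      have h1 : interp C (u.subst θ) ≤ D ^ (2 * sizeT u) * L :=
        ih u hu (fun g hg => hsym g (mem_symbols_app.2 (Or.inr ⟨u, hu, hg⟩)))
          (fun v hv => hvars v (mem_vars_app.2 ⟨u, hu, hv⟩))
          (by have := List.le_sum_of_mem (List.mem_map_of_mem (f := sizeT) hu)
              rw [sizeT_app] at hsize; omega)
      refine h1.trans (Nat.mul_le_mul_right _ (Nat.pow_le_pow_right hD ?_))
      have := List.le_sum_of_mem (List.mem_map_of_mem (f := sizeT) hu)
      omega
    have hsum : ((ts.map (fun u => u.subst θ)).map (interp C)).sum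
        ≤ ts.length * (D ^ (2 * S) * L) := by
      rw [List.map_map]
      have := List.sum_le_card_nsmul (ts.map (interp C ∘ fun u => u.subst θ))
        (D ^ (2 * S) * L) (by
          intro x hx
          rcases List.mem_map.1 hx with ⟨u, hu, rfl⟩
          exact harg u hu)
      simpa [smul_eq_mul] using this
    have hlen : ts.length + 1 ≤ D := by
      have h2 : ts.length ≤ S := by
        have := List.card_nsmul_le_sum (ts.map sizeT) 1 (fun x hx => by
          rcases List.mem_map.1 hx with ⟨u, _, rfl⟩; exact sizeT_pos u)
        simpa [smul_eq_mul] using this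
      rw [sizeT_app] at hsize; omega
    calc C f * (1 + ((ts.map (fun u => u.subst θ)).map (interp C)).sum)
        ≤ D * (1 + ts.length * (D ^ (2 * S) * L)) := by
          exact Nat.mul_le_mul hCf (by omega)
      _ ≤ D * ((ts.length + 1) * (D ^ (2 * S) * L)) := by
          have hpos : 0 < D ^ (2 * S) * L := by positivity
          refine Nat.mul_le_mul_left _ ?_
          nlinarith
      _ ≤ D * (D * (D ^ (2 * S) * L)) :=
          Nat.mul_le_mul_left _ (Nat.mul_le_mul_right _ hlen)
      _ ≤ D ^ (2 * sizeT (Term.app f ts)) * L := by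
          rw [sizeT_app, ← hS, show 2 * (1 + S) = 2 * S + 2 by ring, pow_add]
          ring_nf
          omega

end Aux3
section Aux4
variable {σ ν : Type}

theorem under_finite (P : TRS σ ν) (f : σ) :
    {g | Relation.TransGen P.NeedsEdge f g}.Finite := by
  have htar : {g | ∃ ρ ∈ P.rules, g ∈ (Rule.rhs ρ).symbols}.Finite := by
    have heq : {g | ∃ ρ ∈ P.rules, g ∈ (Rule.rhs ρ).symbols}
        = ⋃ ρ ∈ {ρ | ρ ∈ P.rules}, (Rule.rhs ρ).symbols := by ext; simp
    rw [heq]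
    exact Set.Finite.biUnion (P.rules.finite_toSet) (fun ρ _ => symbols_finite _)
  refine htar.subset ?_
  intro g hg
  induction hg with
  | single h => obtain ⟨ρ, hρ, _, hmem⟩ := h; exact ⟨ρ, hρ, hmem⟩
  | tail _ h => obtain ⟨ρ, hρ, _, hmem⟩ := h; exact ⟨ρ, hρ, hmem⟩

theorem under_decrease (P : TRS σ ν) {Reach : Set σ}
    (hcyc : ∀ g ∈ Reach, ¬ Relation.TransGen P.NeedsEdge g g)
    (hclosed : ∀ f ∈ Reach, ∀ g, P.NeedsEdge f g → g ∈ Reach) {f g : σ}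
    (hf : f ∈ Reach) (he : P.NeedsEdge f g) :
    {x | Relation.TransGen P.NeedsEdge g x}.ncard
      < {x | Relation.TransGen P.NeedsEdge f x}.ncard := by
  have hgR := hclosed f hf g he
  have hsub : {x | Relation.TransGen P.NeedsEdge g x}
      ⊆ {x | Relation.TransGen P.NeedsEdge f x} :=
    fun x hx => Relation.TransGen.head he hx
  have hgin : g ∈ {x | Relation.TransGen P.NeedsEdge f x} := Relation.TransGen.single he
  have hgnot : g ∉ {x | Relation.TransGen P.NeedsEdge g x} := hcyc g hgR
  refine Set.ncard_lt_ncard ?_ (under_finite P f)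
  rw [Set.ssubset_def]
  exact ⟨hsub, fun h => hgnot (h hgin)⟩

end Aux4
/-- **Proposition 2.** If there is an infinite rewrite sequence
starting from `t`, then the needs graph of `P` contains a directed cycle
having a vertex reachable by a directed path (possibly of length zero) from a
vertex representing a symbol occurring in `t`. -/
theorem infinite_rewrite_seq_implies_reachable_cycle {σ ν : Type} (P : TRS σ ν)
    (t : Term σ ν) (seq : ℕ → Term σ ν) (h0 : seq 0 = t)
    (hstep : ∀ n : ℕ, P.Rewrite (seq n) (seq (n + 1))) :
    ∃ a ∈ t.symbols, ∃ f : σ,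
      Relation.ReflTransGen P.NeedsEdge a f ∧ Relation.TransGen P.NeedsEdge f f := by
  by_contra hcon
  push_neg at hcon
  set Reach : Set σ := {g | ∃ a ∈ t.symbols, Relation.ReflTransGen P.NeedsEdge a g} with hRdef
  have hcyc : ∀ g ∈ Reach, ¬ Relation.TransGen P.NeedsEdge g g := by
    rintro g ⟨a, ha, hpath⟩ hgg
    exact hcon a ha g hpath hgg
  have hclosed : ∀ f ∈ Reach, ∀ g, P.NeedsEdge f g → g ∈ Reach := by
    rintro f ⟨a, ha, hpath⟩ g he
    exact ⟨a, ha, hpath.tail he⟩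
  set B : ℕ := 2 + (P.rules.map fun ρ => sizeT ρ.rhs).sum with hBdef
  set K : ℕ → ℕ := fun n => B ^ ((2 * B + 1) ^ n) with hKdef
  set h : σ → ℕ := fun f => {g | Relation.TransGen P.NeedsEdge f g}.ncard with hhdef
  set C : σ → ℕ := fun f => K (h f) with hCdef
  have hB2 : 2 ≤ B := by omega
  have hK2 : ∀ n, 2 ≤ K n := by
    intro n
    refine le_trans hB2 (Nat.le_self_pow ?_ B)
    positivity
  have hKmono : ∀ m n, m ≤ n → K m ≤ K n := by
    intro m n hmn
    exact Nat.pow_le_pow_right (by omega) (Nat.pow_le_pow_right (by omega) hmn)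
  have hKstep : ∀ n, K (n + 1) = K n ^ (2 * B + 1) := by
    intro n
    show B ^ ((2 * B + 1) ^ (n + 1)) = (B ^ ((2 * B + 1) ^ n)) ^ (2 * B + 1)
    rw [← pow_mul, pow_succ]
  have hK0 : K 0 = B := by simp [hKdef]
  have hC1 : ∀ f, 1 ≤ C f := fun f => le_trans one_le_two (hK2 _)
  have hsizeB : ∀ ρ ∈ P.rules, sizeT ρ.rhs ≤ B := by
    intro ρ hρ
    have h1 := List.le_sum_of_mem (List.mem_map_of_mem (f := fun ρ => sizeT (Rule.rhs ρ)) hρ)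
    omega
  -- decrease for a root step
  have hroot : ∀ ρ ∈ P.rules, ∀ θ : ν → Term σ ν, (ρ.lhs.subst θ).symbols ⊆ Reach →
      interp C (ρ.rhs.subst θ) < interp C (ρ.lhs.subst θ) := by
    intro ρ hρ θ hsub
    obtain ⟨f, ls, hl⟩ := lhs_app ρ
    have hsubst : ρ.lhs.subst θ = Term.app f (ls.map (·.subst θ)) := by rw [hl, subst_app]
    set L : ℕ := 1 + ((ls.map (·.subst θ)).map (interp C)).sum with hLdef
    have hIl : interp C (ρ.lhs.subst θ) = C f * L := by rw [hsubst, interp_app]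
    have hfR : f ∈ Reach := hsub (by rw [hsubst]; exact mem_symbols_app.2 (Or.inl rfl))
    have hfroot : ρ.lhs.root = some f := by rw [hl]; rfl
    have hθL : ∀ v ∈ ρ.rhs.vars, interp C (θ v) ≤ L := by
      intro v hv
      have hvl : v ∈ ρ.lhs.vars := ρ.vars_subset hv
      rw [hl] at hvl
      rcases mem_vars_app.1 hvl with ⟨u, hu, hvu⟩
      have h2 : interp C (θ v) ≤ interp C (u.subst θ) := interp_subterm hC1 (theta_subterm hvu)
      have h3 : interp C (u.subst θ) ≤ ((ls.map (·.subst θ)).map (interp C)).sum :=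
        List.le_sum_of_mem (List.mem_map_of_mem (List.mem_map_of_mem hu))
      omega
    have hL1 : 1 ≤ L := by omega
    have hH : ∀ g ∈ ρ.rhs.symbols, h g < h f :=
      fun g hg => under_decrease P hcyc hclosed hfR ⟨ρ, hρ, hfroot, hg⟩
    rw [hIl]
    cases hr : ρ.rhs with
    | var v =>
      rw [Term.subst]
      have h4 := hθL v (by rw [hr, vars_var]; rfl)
      have h5 := hK2 (h f)
      have h6 : C f = K (h f) := rfl
      nlinarith
    | app g rs =>
      rw [← hr]
      have hg0 : g ∈ ρ.rhs.symbols := by rw [hr]; exact mem_symbols_app.2 (Or.inl rfl)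
      have hH1 : 1 ≤ h f := by have := hH g hg0; omega
      set D : ℕ := K (h f - 1) with hDdef
      have hD1 : 1 ≤ D := le_trans one_le_two (hK2 _)
      have hsize : sizeT ρ.rhs ≤ D := by
        calc sizeT ρ.rhs ≤ B := hsizeB ρ hρ
          _ = K 0 := hK0.symm
          _ ≤ D := hKmono 0 _ (Nat.zero_le _)
      have hsymD : ∀ g' ∈ ρ.rhs.symbols, C g' ≤ D := by
        intro g' hg'
        have := hH g' hg'
        exact hKmono _ _ (by omega)
      have hbound := interp_subst_le hL1 hD1 ρ.rhs hsymD hθL hsize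
      refine lt_of_le_of_lt hbound ?_
      have hCfD : C f = D ^ (2 * B + 1) := by
        show K (h f) = D ^ (2 * B + 1)
        rw [hDdef, ← hKstep, Nat.sub_add_cancel hH1]
      rw [hCfD]
      have hsB := hsizeB ρ hρ
      have hD2 : 2 ≤ D := hK2 _
      have hexp : D ^ (2 * sizeT ρ.rhs) * 2 ≤ D ^ (2 * B + 1) := by
        calc D ^ (2 * sizeT ρ.rhs) * 2 ≤ D ^ (2 * B) * D :=
            Nat.mul_le_mul (Nat.pow_le_pow_right hD1 (by omega)) hD2
          _ = D ^ (2 * B + 1) := by rw [pow_succ]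
      have hpow1 : 1 ≤ D ^ (2 * sizeT ρ.rhs) := Nat.one_le_pow _ _ (by omega)
      nlinarith
  -- decrease for any step on reachable terms
  have hdecstep : ∀ s u : Term σ ν, P.Rewrite s u → s.symbols ⊆ Reach →
      interp C u < interp C s := by
    intro s u hr
    induction hr with
    | @root ρ hρ θ => exact hroot ρ hρ θ
    | @congr s' t' f pre post hst ih =>
      intro hsub
      have hs' : s'.symbols ⊆ Reach := by
        intro g hg
        exact hsub (mem_symbols_app.2 (Or.inr ⟨s',
          List.mem_append.2 (Or.inr (List.mem_cons_self)), hg⟩))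
      have hlt := ih hs'
      rw [interp_app, interp_app]
      refine Nat.mul_lt_mul_of_pos_left ?_ (hC1 f)
      simp only [List.map_append, List.map_cons, List.sum_append, List.sum_cons]
      omega
  -- the invariant: all terms in the sequence have reachable symbols
  have hinv : ∀ s u : Term σ ν, P.Rewrite s u → s.symbols ⊆ Reach → u.symbols ⊆ Reach := by
    intro s u hr
    induction hr with
    | @root ρ hρ θ =>
      intro hsub g hg
      obtain ⟨f, ls, hl⟩ := lhs_app ρ
      have hfroot : ρ.lhs.root = some f := by rw [hl]; rfl
      have hfR : f ∈ Reach := hsub (by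
        rw [hl, subst_app]; exact mem_symbols_app.2 (Or.inl rfl))
      rcases symbols_subst θ ρ.rhs g hg with hmem | ⟨v, hv, hmem⟩
      · exact hclosed f hfR g ⟨ρ, hρ, hfroot, hmem⟩
      · exact hsub (symbols_subset_of_subterm (theta_subterm (ρ.vars_subset hv)) hmem)
    | @congr s' t' f pre post hst ih =>
      intro hsub g hg
      have hs' : s'.symbols ⊆ Reach := by
        intro g' hg'
        exact hsub (mem_symbols_app.2 (Or.inr ⟨s',
          List.mem_append.2 (Or.inr (List.mem_cons_self)), hg'⟩))
      rcases mem_symbols_app.1 hg with rfl | ⟨u', hu', hg'⟩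
      · exact hsub (mem_symbols_app.2 (Or.inl rfl))
      · rcases List.mem_append.1 hu' with hpre | hct
        · exact hsub (mem_symbols_app.2 (Or.inr ⟨u', List.mem_append.2 (Or.inl hpre), hg'⟩))
        · rcases List.mem_cons.1 hct with rfl | hpost
          · exact ih hs' hg'
          · exact hsub (mem_symbols_app.2 (Or.inr ⟨u',
              List.mem_append.2 (Or.inr (List.mem_cons_of_mem _ hpost)), hg'⟩))
  have hseq : ∀ n, (seq n).symbols ⊆ Reach := by
    intro n
    induction n with
    | zero => rw [h0]; exact fun g hg => ⟨g, hg, Relation.ReflTransGen.refl⟩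
    | succ n ih => exact hinv _ _ (hstep n) ih
  have hmu : ∀ n, interp C (seq (n + 1)) < interp C (seq n) :=
    fun n => hdecstep _ _ (hstep n) (hseq n)
  have hbd : ∀ n, interp C (seq n) + n ≤ interp C (seq 0) := by
    intro n
    induction n with
    | zero => omega
    | succ n ih => have := hmu n; omega
  have := hbd (interp C (seq 0) + 1)
  omega
end

section
/- If the needs graph of a term rewriting system P has no vertex with in-degree at least one and out-degree at least one, then the needs graph of P is acyclic, and consequently the rewrite relation of P is terminating: there is no infinite rewrite sequence t0 →_P t1 →_P t2 →_P ... . In particular (Proposition 3 of the paper, contrapositive of its graph condition), if the computation of the normal form of some term with respect to P performs infinitely many reduction steps, then the needs graph of P contains a node with in-degree at least one and out-degree at least one. -/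
section Aux

namespace Term

variable {σ ν : Type}

/-- Custom induction principle for `Term`. -/
theorem my_ind_s9 {motive : Term σ ν → Prop} (hv : ∀ v, motive (.var v))
    (ha : ∀ f ts, (∀ t ∈ ts, motive t) → motive (.app f ts)) : ∀ t, motive t
  | .var v => hv v
  | .app f ts => ha f ts (fun t ht => my_ind_s9 hv ha t)
  decreasing_by have := List.sizeOf_lt_of_mem ht; simp at this ⊢; omega

/-- A weight function on terms, parameterized by symbol weights. -/
def wt (c : σ → ℕ) : Term σ ν → ℕ
  | .var _ => 1
  | .app f ts => c f * (1 + (ts.attach.map fun x => wt c x.1).sum)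
  decreasing_by have := List.sizeOf_lt_of_mem x.2; simp at this ⊢; omega

@[simp] theorem wt_var (c : σ → ℕ) (v : ν) : wt c (.var v) = 1 := by rw [wt]

theorem wt_app (c : σ → ℕ) (f : σ) (ts : List (Term σ ν)) :
    wt c (.app f ts) = c f * (1 + (ts.map (wt c)).sum) := by
  rw [wt, List.attach_map_val]

theorem subst_app (θ : ν → Term σ ν) (f : σ) (ts : List (Term σ ν)) :
    subst θ (.app f ts) = .app f (ts.map (subst θ)) := by
  rw [subst, List.attach_map_val]

theorem mem_foldr_union {α : Type} (x : α) (L : List (Set α)) :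
    x ∈ L.foldr (· ∪ ·) ∅ ↔ ∃ s ∈ L, x ∈ s := by
  induction L with
  | nil => simp
  | cons s L ih => simp [ih]

theorem mem_vars_app {v : ν} {f : σ} {ts : List (Term σ ν)} :
    v ∈ vars (.app f ts : Term σ ν) ↔ ∃ t ∈ ts, v ∈ vars t := by
  rw [vars, List.attach_map_val, mem_foldr_union]
  simp

theorem mem_symbols_app {g : σ} {f : σ} {ts : List (Term σ ν)} :
    g ∈ symbols (.app f ts : Term σ ν) ↔ g = f ∨ ∃ t ∈ ts, g ∈ symbols t := by
  rw [symbols, List.attach_map_val]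
  simp only [Set.mem_union, Set.mem_singleton_iff, mem_foldr_union]
  simp

theorem mem_vars_var {v w : ν} : v ∈ vars (.var w : Term σ ν) ↔ v = w := by
  rw [vars]; simp

theorem one_le_wt {c : σ → ℕ} (hc : ∀ f, 1 ≤ c f) (t : Term σ ν) : 1 ≤ wt c t := by
  induction t using my_ind_s9 with
  | hv v => simp
  | ha f ts _ =>
    rw [wt_app]
    have h1 := hc f
    have h2 : 0 < c f * (1 + (ts.map (wt c)).sum) := Nat.mul_pos h1 (by omega)
    omega

/-- Lower bound: substituted variables are dominated by the weight. -/
theorem wt_subst_ge {c : σ → ℕ} (hc : ∀ f, 1 ≤ c f) (θ : ν → Term σ ν) :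
    ∀ t : Term σ ν, ∀ v ∈ vars t, wt c (θ v) ≤ wt c (subst θ t) := by
  intro t
  induction t using my_ind_s9 with
  | hv w =>
    intro v hv
    rw [mem_vars_var] at hv
    subst hv
    rw [subst]
  | ha f ts ih =>
    intro v hv
    obtain ⟨u, hu, hvu⟩ := mem_vars_app.1 hv
    calc wt c (θ v) ≤ wt c (subst θ u) := ih u hu v hvu
      _ ≤ ((ts.map (subst θ)).map (wt c)).sum := by
          refine List.single_le_sum (fun _ _ => Nat.zero_le _) _ ?_
          exact List.mem_map_of_mem (List.mem_map_of_mem hu)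
      _ ≤ wt c (subst θ (.app f ts)) := by
          rw [subst_app, wt_app]
          have h1 := hc f
          calc ((ts.map (subst θ)).map (wt c)).sum
              ≤ 1 * (1 + ((ts.map (subst θ)).map (wt c)).sum) := by omega
            _ ≤ c f * (1 + ((ts.map (subst θ)).map (wt c)).sum) :=
                Nat.mul_le_mul_right _ h1

/-- Upper bound on the weight of a substituted term. -/
theorem wt_subst_le {c : σ → ℕ} (θ : ν → Term σ ν) (T : ℕ) :
    ∀ t : Term σ ν, (∀ v ∈ vars t, wt c (θ v) ≤ T) →
      wt c (subst θ t) ≤ wt c t * (1 + T) := by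
  intro t
  induction t using my_ind_s9 with
  | hv w =>
    intro hb
    rw [subst, wt_var, one_mul]
    have := hb w (mem_vars_var.2 rfl)
    omega
  | ha f ts ih =>
    intro hb
    rw [subst_app, wt_app, wt_app, List.map_map]
    have hsum : ((ts.map (fun u => wt c (subst θ u)))).sum ≤
        (ts.map (fun u => wt c u * (1 + T))).sum := by
      refine List.sum_le_sum ?_
      intro u hu
      exact ih u hu (fun v hv => hb v (mem_vars_app.2 ⟨u, hu, hv⟩))
    have h2 : (ts.map (fun u => wt c u * (1 + T))).sum = (ts.map (wt c)).sum * (1 + T) := by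
      rw [← List.sum_map_mul_right]
    have h3 : (ts.map fun u => wt c (subst θ u)).sum ≤ (ts.map (wt c)).sum * (1 + T) := by
      rw [← h2]; exact hsum
    calc c f * (1 + (ts.map fun x => wt c (subst θ x)).sum)
        ≤ c f * (1 + T + (ts.map (wt c)).sum * (1 + T)) := by
          refine Nat.mul_le_mul_left _ ?_; omega
      _ = c f * (1 + (ts.map (wt c)).sum) * (1 + T) := by ring

/-- Two weight functions agreeing on the symbols of `t` give the same weight. -/
theorem wt_congr_symbols {c c' : σ → ℕ} :
    ∀ t : Term σ ν, (∀ g ∈ symbols t, c g = c' g) → wt c t = wt c' t := by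
  intro t
  induction t using my_ind_s9 with
  | hv v => simp
  | ha f ts ih =>
    intro hb
    rw [wt_app, wt_app, hb f (mem_symbols_app.2 (Or.inl rfl))]
    have : ts.map (wt c) = ts.map (wt c') :=
      List.map_congr_left fun u hu =>
        ih u hu (fun g hg => hb g (mem_symbols_app.2 (Or.inr ⟨u, hu, hg⟩)))
    rw [this]

end Term

end Aux

/-- If the needs graph of `P` has no vertex with in-degree at
least one and out-degree at least one, then the needs graph is acyclic and the
rewrite relation of `P` is terminating: there is no infinite rewrite sequence
`t 0 →_P t 1 →_P t 2 →_P ⋯`. -/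
theorem no_useful_vertex_implies_acyclic_and_terminating {σ ν : Type}
    (P : TRS σ ν)
    (h : ¬ ∃ f : σ, (∃ g : σ, P.NeedsEdge g f) ∧ (∃ g : σ, P.NeedsEdge f g)) :
    (¬ ∃ f : σ, Relation.TransGen P.NeedsEdge f f) ∧
      ¬ ∃ t : ℕ → Term σ ν, ∀ n : ℕ, P.Rewrite (t n) (t (n + 1)) := by
  classical
  -- Part 1: acyclicity
  have acyclic : ¬ ∃ f : σ, Relation.TransGen P.NeedsEdge f f := by
    rintro ⟨f, hf⟩
    have hout : ∃ g, P.NeedsEdge f g := by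
      obtain ⟨b, hb, -⟩ := Relation.TransGen.head'_iff.1 hf
      exact ⟨b, hb⟩
    have hin : ∃ g, P.NeedsEdge g f := by
      obtain ⟨b, -, hb⟩ := Relation.TransGen.tail'_iff.1 hf
      exact ⟨b, hb⟩
    exact h ⟨f, hin, hout⟩
  refine ⟨acyclic, ?_⟩
  -- Part 2: termination, via a weight function.
  -- `D f` : `f` has an outgoing edge in the needs graph.
  set D : σ → Prop := fun f => ∃ g, P.NeedsEdge f g with hD
  -- base weight with all symbols of weight 2
  set c₂ : σ → ℕ := fun _ => 2 with hc₂
  set M : ℕ := 1 + (P.rules.map (fun ρ => Term.wt c₂ ρ.rhs)).sum with hM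
  set c : σ → ℕ := fun f => if D f then M else 2 with hc
  have hc1 : ∀ f, 1 ≤ c f := by
    intro f; rw [hc]; dsimp only; split <;> omega
  have hc2 : ∀ (ρ : Rule σ ν), ρ ∈ P.rules → ∀ f, 2 ≤ c f := by
    intro ρ hρ f
    have h1 : 1 ≤ Term.wt c₂ ρ.rhs := Term.one_le_wt (by intro g; simp [hc₂]) _
    have h2 : Term.wt c₂ ρ.rhs ≤ (P.rules.map (fun ρ => Term.wt c₂ ρ.rhs)).sum := by
      simpa using List.single_le_sum (fun (x : ℕ) (_ : x ∈ P.rules.map (fun ρ => Term.wt c₂ ρ.rhs)) => Nat.zero_le x) _ (List.mem_map_of_mem hρ)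
    rw [hc]; dsimp only; split
    · rw [hM]; omega
    · omega
  -- Key lemma: one rewrite step strictly decreases the weight.
  have key : ∀ s t : Term σ ν, P.Rewrite s t → Term.wt c t < Term.wt c s := by
    intro s t hst
    induction hst with
    | root hρ θ =>
      rename_i ρ
      -- the left-hand side is an application
      obtain ⟨f, ts, hl⟩ : ∃ f ts, ρ.lhs = Term.app f ts := by
        cases hl : ρ.lhs with
        | var v => exact absurd hl (ρ.lhs_not_var v)
        | app f ts => exact ⟨f, ts, rfl⟩
      set T : ℕ := (ts.map (fun u => Term.wt c (u.subst θ))).sum with hT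
      have hwl : Term.wt c (ρ.lhs.subst θ) = c f * (1 + T) := by
        rw [hl, Term.subst_app, Term.wt_app, List.map_map]; rfl
      -- every variable of the rhs is bounded by T
      have hbound : ∀ v ∈ ρ.rhs.vars, Term.wt c (θ v) ≤ T := by
        intro v hv
        have hv' : v ∈ ρ.lhs.vars := ρ.vars_subset hv
        rw [hl] at hv'
        obtain ⟨u, hu, hvu⟩ := Term.mem_vars_app.1 hv'
        calc Term.wt c (θ v) ≤ Term.wt c (u.subst θ) := Term.wt_subst_ge hc1 θ u v hvu
          _ ≤ T := List.single_le_sum (fun _ _ => Nat.zero_le _) _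
              (List.mem_map_of_mem hu)
      rw [hwl]
      cases hr : ρ.rhs with
      | var v =>
        rw [Term.subst]
        have h1 : Term.wt c (θ v) ≤ T := by
          refine hbound v ?_
          rw [hr, Term.mem_vars_var]
        have h2 : 2 ≤ c f := hc2 ρ hρ f
        nlinarith
      | app g us =>
        -- f is a defined symbol with an outgoing edge, so `c f = M`
        have hroot : ρ.lhs.root = some f := by rw [hl, Term.root]
        have hg : g ∈ ρ.rhs.symbols := by
          rw [hr]; exact Term.mem_symbols_app.2 (Or.inl rfl)
        have hDf : D f := ⟨g, ρ, hρ, hroot, hg⟩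
        have hcf : c f = M := by rw [hc]; simp [hDf]
        -- no symbol of the rhs has an outgoing edge
        have hnone : ∀ g' ∈ ρ.rhs.symbols, c g' = c₂ g' := by
          intro g' hg'
          have hin : ∃ g'', P.NeedsEdge g'' g' := ⟨f, ρ, hρ, hroot, hg'⟩
          have hnD : ¬ D g' := fun hD' => h ⟨g', hin, hD'⟩
          rw [hc, hc₂]; simp [hnD]
        have heq : Term.wt c ρ.rhs = Term.wt c₂ ρ.rhs :=
          Term.wt_congr_symbols ρ.rhs hnone
        have hMb : Term.wt c ρ.rhs + 1 ≤ M := by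
          rw [heq, hM]
          have h5 : Term.wt c₂ ρ.rhs ≤ (P.rules.map (fun ρ => Term.wt c₂ ρ.rhs)).sum := by
            simpa using List.single_le_sum (fun (x : ℕ) (_ : x ∈ P.rules.map (fun ρ => Term.wt c₂ ρ.rhs)) => Nat.zero_le x) _ (List.mem_map_of_mem (f := fun ρ => Term.wt c₂ ρ.rhs) hρ)
          omega
        have hup : Term.wt c (ρ.rhs.subst θ) ≤ Term.wt c ρ.rhs * (1 + T) :=
          Term.wt_subst_le θ T ρ.rhs hbound
        have hT1 : 1 ≤ 1 + T := by omega
        rw [← hr]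
        calc Term.wt c (ρ.rhs.subst θ) ≤ Term.wt c ρ.rhs * (1 + T) := hup
          _ < (Term.wt c ρ.rhs + 1) * (1 + T) := by nlinarith
          _ ≤ M * (1 + T) := Nat.mul_le_mul_right _ hMb
          _ = c f * (1 + T) := by rw [hcf]
    | congr f pre post hst ih =>
      rename_i s' t'
      rw [Term.wt_app, Term.wt_app]
      have hpos : 0 < c f := hc1 f
      have : ((pre ++ t' :: post).map (Term.wt c)).sum <
          ((pre ++ s' :: post).map (Term.wt c)).sum := by
        simp only [List.map_append, List.map_cons, List.sum_append, List.sum_cons]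
        omega
      exact Nat.mul_lt_mul_of_pos_left (by omega) hpos
  -- conclude: no infinite sequence
  rintro ⟨t, ht⟩
  have mono : ∀ n, Term.wt c (t n) + n ≤ Term.wt c (t 0) := by
    intro n
    induction n with
    | zero => omega
    | succ n ih =>
      have := key (t n) (t (n + 1)) (ht n)
      omega
  have := mono (Term.wt c (t 0) + 1)
  omega
end
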